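/- Let K ⊂ ℝⁿ be an open convex cone containing {x ∈ ℝⁿ : xᵢ ≥ 0 for all i, x ≠ 0}, and set L := ℝⁿ∖(K ∪ −K). Let E ⊂ ℝⁿ be a set such that a − b ∈ L for all a, b ∈ E with a ≠ b. Let s(x) := x₁ + … + xₙ and let π : ℝⁿ → Z be the orthogonal projection onto the hyperplane Z := {x : s(x) = 0}. Then π restricted to E is injective, and the function g : π(E) → ℝ defined by g(π(a)) := s(a) for a ∈ E is Lipschitz, with a Lipschitz constant depending only on K; in particular E is the graph over π(E) of a Lipschitz function. -/

import Mathlib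

noncomputable def Zhyper (n : ℕ) : Submodule ℝ (EuclideanSpace ℝ (Fin n)) :=
  (Submodule.span ℝ {(WithLp.toLp 2 (fun _ => 1 : Fin n → ℝ) : EuclideanSpace ℝ (Fin n))})ᗮ

def vone (n : ℕ) : EuclideanSpace ℝ (Fin n) := WithLp.toLp 2 (fun _ => 1)

lemma decomp {n : ℕ} (x : EuclideanSpace ℝ (Fin n)) :
    x = ((∑ i, x i) / n) • vone n
        + (Submodule.orthogonalProjectionOnto (Zhyper n) x : EuclideanSpace ℝ (Fin n)) := by
  have h := Submodule.starProjection_add_starProjection_orthogonal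
    (K := Submodule.span ℝ {vone n}) x
  have hs : (Submodule.orthogonalProjectionOnto (Submodule.span ℝ {vone n}) x : EuclideanSpace ℝ (Fin n))
      = ((inner ℝ (vone n) x : ℝ) / ‖vone n‖^2) • vone n := by
    rw [← Submodule.starProjection_apply, Submodule.starProjection_singleton]; norm_num
  have hinner : (inner ℝ (vone n) x : ℝ) = ∑ i, x i := by
    simp [PiLp.inner_apply, vone]
  have hnorm : ‖vone n‖^2 = (n : ℝ) := by
    rw [← real_inner_self_eq_norm_sq]
    rw [PiLp.inner_apply]; simp [vone]
  rw [hinner, hnorm] at hs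
  have hz : Zhyper n = (Submodule.span ℝ {vone n})ᗮ := rfl
  rw [hz, ← hs]
  exact h.symm

lemma sum_sub {n : ℕ} (a b : EuclideanSpace ℝ (Fin n)) :
    (∑ i, (a - b) i) = (∑ i, a i) - ∑ i, b i := by
  simp [Finset.sum_sub_distrib]

/-- The graph lemma inside the proof of **Lemma 2.1**: if `E ⊂ ℝⁿ` satisfies the `K`-cone
condition for an open convex cone `K ⊇ {x ≥ 0, x ≠ 0}`, then the orthogonal projection
`π` onto the hyperplane `Z = {Σ xᵢ = 0}` is injective on `E`, and `E` is the graph over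
`π(E)` of a function `g(π a) = Σᵢ aᵢ` which is Lipschitz with constant depending only on
`K`. -/
theorem graph_lemma {n : ℕ} (K : Set (EuclideanSpace ℝ (Fin n)))
    (hKopen : IsOpen K) (hKconv : Convex ℝ K)
    (hKcone : ∀ x ∈ K, ∀ t : ℝ, 0 < t → t • x ∈ K)
    (hKpos : {x : EuclideanSpace ℝ (Fin n) | (∀ i, 0 ≤ x i) ∧ x ≠ 0} ⊆ K) :
    ∃ c : ℝ, 0 ≤ c ∧ ∀ E : Set (EuclideanSpace ℝ (Fin n)),
      (∀ a ∈ E, ∀ b ∈ E, a ≠ b → a - b ∉ K ∪ (-K)) →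
      Set.InjOn (fun x => Submodule.orthogonalProjectionOnto (Zhyper n) x) E ∧
      ∀ a ∈ E, ∀ b ∈ E,
        |(∑ i, a i) - ∑ i, b i| ≤
          c * ‖Submodule.orthogonalProjectionOnto (Zhyper n) a - Submodule.orthogonalProjectionOnto (Zhyper n) b‖ := by
  rcases Nat.eq_zero_or_pos n with hn | hn
  · subst hn
    refine ⟨0, le_refl 0, fun E _ => ⟨fun a _ b _ _ => Subsingleton.elim a b, ?_⟩⟩
    intro a _ b _
    have : a = b := Subsingleton.elim a b
    subst this
    simp
  · -- v ∈ K, get ball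
    have hvK : vone n ∈ K := by
      apply hKpos
      refine ⟨fun i => zero_le_one, ?_⟩
      intro h
      have h0 : vone n (⟨0, hn⟩ : Fin n) = 0 := by rw [h]; rfl
      simp [vone] at h0
    obtain ⟨ε, hε, hball⟩ := Metric.isOpen_iff.mp hKopen _ hvK
    refine ⟨n / ε, by positivity, fun E hE => ?_⟩
    -- key bound
    have key : ∀ x : EuclideanSpace ℝ (Fin n), x ∉ K ∪ (-K) →
        |∑ i, x i| ≤ (n / ε) * ‖(Submodule.orthogonalProjectionOnto (Zhyper n) x : EuclideanSpace ℝ (Fin n))‖ := by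
      intro x hx
      by_contra hcon
      push_neg at hcon
      set s : ℝ := ∑ i, x i with hsdef
      set p : EuclideanSpace ℝ (Fin n) := (Submodule.orthogonalProjectionOnto (Zhyper n) x : EuclideanSpace ℝ (Fin n)) with hpdef
      set t : ℝ := s / n with htdef
      have hnpos : (0:ℝ) < n := by exact_mod_cast hn
      have hsne : s ≠ 0 := by
        intro h0
        rw [h0] at hcon; simp at hcon
        have : (0:ℝ) ≤ (n / ε) * ‖p‖ := by positivity
        linarith [abs_nonneg (0:ℝ)]
      have htne : t ≠ 0 := div_ne_zero hsne (ne_of_gt hnpos)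
      have habs : ‖p‖ < ε * |t| := by
        have h1 : (n / ε) * ‖p‖ < |s| := hcon
        have h2 : |t| = |s| / n := by rw [htdef, abs_div, abs_of_pos hnpos]
        rw [h2]
        rw [div_mul_eq_mul_div, div_lt_iff₀ hε] at h1
        calc ‖p‖ = (n * ‖p‖) / n := by field_simp
        _ < (|s| * ε) / n := by gcongr
        _ = ε * (|s| / n) := by ring
      have hw : vone n + t⁻¹ • p ∈ K := by
        apply hball
        rw [Metric.mem_ball, dist_eq_norm]
        have : vone n + t⁻¹ • p - vone n = t⁻¹ • p := by abel
        rw [this, norm_smul]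
        rw [norm_inv, Real.norm_eq_abs]
        rw [inv_mul_lt_iff₀ (abs_pos.mpr htne)]
        rw [mul_comm] at habs ⊢
        linarith
      have hx_eq : x = t • (vone n + t⁻¹ • p) := by
        rw [smul_add, smul_smul, mul_inv_cancel₀ htne, one_smul]
        exact decomp x
      rcases lt_or_gt_of_ne htne with htneg | htpos
      · apply hx
        right
        rw [Set.mem_neg]
        have : -x = (-t) • (vone n + t⁻¹ • p) := by rw [hx_eq, neg_smul]
        rw [this]
        exact hKcone _ hw _ (by linarith)
      · apply hx
        left
        rw [hx_eq]
        exact hKcone _ hw _ htpos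
    constructor
    · intro a ha b hb hab
      by_contra hne
      have hL := hE a ha b hb hne
      have hp : (Submodule.orthogonalProjectionOnto (Zhyper n) (a - b) : EuclideanSpace ℝ (Fin n)) = 0 := by
        rw [map_sub]
        simp only at hab
        rw [hab]
        simp
      have := key (a - b) hL
      rw [hp, norm_zero, mul_zero] at this
      have hs0 : (∑ i, (a - b) i) = 0 :=
        abs_eq_zero.mp (le_antisymm this (abs_nonneg _))
      have : a - b = 0 := by
        have hd := decomp (a - b)
        rw [hs0, hp] at hd
        simpa using hd
      exact hne (sub_eq_zero.mp this)
    · intro a ha b hb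
      rcases eq_or_ne a b with rfl | hne
      · simp
      · have hL := hE a ha b hb hne
        have := key (a - b) hL
        rw [sum_sub] at this
        have hmap : (Submodule.orthogonalProjectionOnto (Zhyper n) (a - b) : EuclideanSpace ℝ (Fin n))
            = (Submodule.orthogonalProjectionOnto (Zhyper n) a : EuclideanSpace ℝ (Fin n))
              - (Submodule.orthogonalProjectionOnto (Zhyper n) b : EuclideanSpace ℝ (Fin n)) := by
          rw [map_sub]; rfl
        have hnorm_eq : ‖Submodule.orthogonalProjectionOnto (Zhyper n) a - Submodule.orthogonalProjectionOnto (Zhyper n) b‖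
            = ‖(Submodule.orthogonalProjectionOnto (Zhyper n) (a - b) : EuclideanSpace ℝ (Fin n))‖ := by
          rw [map_sub]
          rfl
        rw [hnorm_eq]
        exact this
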